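/- The function K_β(θ) = (1/π)·θ^{β-1} sin(βπ)/(θ^{2β} + 2θ^β cos(βπ) + 1), for β ∈ (0,1), is nonnegative on (0,∞) and satisfies ∫₀^∞ K_β(θ) dθ = 1. -/

import Mathlib

open Real MeasureTheory Set Filter

lemma aux_int (c s : ℝ) (hs : 0 < s) :
    ∫ u in Ioi (0:ℝ), ((u + c) ^ 2 + s ^ 2)⁻¹ =
      (π / 2 - Real.arctan (c / s)) / s := by
  have key := integral_Ioi_of_hasDerivAt_of_nonneg'
    (g := fun u => s⁻¹ * Real.arctan ((u + c) / s))
    (g' := fun u => ((u + c) ^ 2 + s ^ 2)⁻¹)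
    (a := 0) (l := s⁻¹ * (π / 2)) ?_ ?_ ?_
  · rw [key]; field_simp; ring
  · intro x _
    have h1 : HasDerivAt (fun u : ℝ => (u + c) / s) (1 / s) x := by
      simpa using ((hasDerivAt_id x).add_const c).div_const s
    have h2 := (Real.hasDerivAt_arctan ((x + c) / s)).comp x h1
    have h3 := h2.const_mul s⁻¹
    refine HasDerivAt.congr_deriv h3 ?_
    have hx : (0:ℝ) < (x + c) ^ 2 + s ^ 2 := by positivity
    field_simp
    ring
  · intro x _; positivity
  · have h1 : Tendsto (fun u : ℝ => (u + c) / s) atTop atTop :=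
      (tendsto_atTop_add_const_right atTop c tendsto_id).atTop_div_const hs
    exact ((Real.tendsto_arctan_atTop.mono_right nhdsWithin_le_nhds).comp h1).const_mul _

noncomputable def Kβ (β θ : ℝ) : ℝ :=
  (1 / Real.pi) * θ ^ (β - 1) * Real.sin (β * Real.pi) /
    (θ ^ (2 * β) + 2 * θ ^ β * Real.cos (β * Real.pi) + 1)

theorem K_nonneg_and_integral_one (β : ℝ) (hβ : β ∈ Set.Ioo (0:ℝ) 1) :
    (∀ θ ∈ Set.Ioi (0:ℝ), 0 ≤ Kβ β θ) ∧ ∫ θ in Set.Ioi (0:ℝ), Kβ β θ = 1 := by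
  obtain ⟨hβ0, hβ1⟩ := hβ
  set φ := β * π with hφ
  have hφ0 : 0 < φ := mul_pos hβ0 Real.pi_pos
  have hφπ : φ < π := by
    nlinarith [Real.pi_pos]
  have hs : 0 < Real.sin φ := Real.sin_pos_of_pos_of_lt_pi hφ0 hφπ
  have hdenom : ∀ t : ℝ, 0 < t →
      t ^ (2 * β) + 2 * t ^ β * Real.cos φ + 1 = (t ^ β + Real.cos φ) ^ 2 + Real.sin φ ^ 2 := by
    intro t ht
    have h2 : t ^ (2 * β) = (t ^ β) ^ 2 := by
      rw [← Real.rpow_natCast (t ^ β) 2, ← Real.rpow_mul ht.le]; ring_nf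
    rw [h2]
    have := Real.sin_sq_add_cos_sq φ
    ring_nf
    nlinarith [Real.sin_sq_add_cos_sq φ]
  have hKpos : ∀ θ ∈ Set.Ioi (0:ℝ), 0 ≤ Kβ β θ := by
    intro θ hθ
    have hθ0 : (0:ℝ) < θ := hθ
    unfold Kβ
    rw [← hφ, hdenom θ hθ0]
    have h1 : 0 < θ ^ (β - 1) := Real.rpow_pos_of_pos hθ0 _
    have h2 : 0 < (θ ^ β + Real.cos φ) ^ 2 + Real.sin φ ^ 2 := by positivity
    positivity
  refine ⟨hKpos, ?_⟩
  set c := Real.cos φ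
  set g : ℝ → ℝ := fun u => (Real.sin φ / (β * π)) * ((u + c) ^ 2 + Real.sin φ ^ 2)⁻¹ with hg
  have hsub : ∫ θ in Set.Ioi (0:ℝ), Kβ β θ = ∫ u in Set.Ioi (0:ℝ), g u := by
    rw [← integral_comp_rpow_Ioi_of_pos (g := g) hβ0]
    refine setIntegral_congr_fun measurableSet_Ioi fun x hx => ?_
    have hx0 : (0:ℝ) < x := hx
    unfold Kβ
    rw [← hφ, hdenom x hx0, hg]
    simp only [smul_eq_mul]
    have hd : (0:ℝ) < (x ^ β + c) ^ 2 + Real.sin φ ^ 2 := by positivity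
    field_simp
  rw [hsub, hg]
  rw [integral_const_mul, aux_int c (Real.sin φ) hs]
  have harc : Real.arctan (c / Real.sin φ) = π / 2 - φ := by
    have hφ2 : φ ∈ Set.Ioo (-(π/2)) (π/2) → True := fun _ => trivial
    have h1 : c / Real.sin φ = Real.tan (π / 2 - φ) := by
      rw [Real.tan_pi_div_two_sub]
      rw [Real.tan_eq_sin_div_cos]
      field_simp
      rfl
    rw [h1, Real.arctan_tan (by linarith) (by linarith)]
  rw [harc]
  have hβπ : β * π ≠ 0 := by positivity
  field_simp [hφ]
  linarith
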